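/- Let n ≥ 1, a : Fin n → ℝ, and 0 ≤ ε < 1. Define q j = exp(a j)/Σ_k exp(a k). Suppose d : Fin n → ℝ and p j = exp(a j + d j)/Σ_k exp(a k + d k) satisfy p j ≥ (1 - ε) * q j for all j and additionally d j ≥ 0 for all j with d j₀ = 0 for some index j₀. Then for all j, d j ≤ Real.log ((1/(1-ε)) * (1 + ε * (Σ_{k ≠ j} exp(a k - a j)))). -/

import Mathlib

theorem nonneg_boost_bound
    (n : ℕ) (hn : 1 ≤ n) (a : Fin n → ℝ) (ε : ℝ)
    (hε0 : 0 ≤ ε) (hε1 : ε < 1)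
    (d : Fin n → ℝ) (p q : Fin n → ℝ)
    (hq : ∀ j, q j = Real.exp (a j) / ∑ k, Real.exp (a k))
    (hp : ∀ j, p j = Real.exp (a j + d j) / ∑ k, Real.exp (a k + d k))
    (hlow : ∀ j, (1 - ε) * q j ≤ p j)
    (hd0 : ∀ j, 0 ≤ d j) (j₀ : Fin n) (hj₀ : d j₀ = 0) :
    ∀ j, d j ≤ Real.log ((1 / (1 - ε)) *
      (1 + ε * ∑ k ∈ Finset.univ.erase j, Real.exp (a k - a j))) := by
  intro j
  have h1ε : 0 < 1 - ε := by linarith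
  set S := ∑ k, Real.exp (a k) with hS
  set T := ∑ k, Real.exp (a k + d k) with hT
  have hSpos : 0 < S :=
    Finset.sum_pos (fun k _ => Real.exp_pos _) ⟨⟨0, hn⟩, Finset.mem_univ _⟩
  have hTpos : 0 < T :=
    Finset.sum_pos (fun k _ => Real.exp_pos _) ⟨⟨0, hn⟩, Finset.mem_univ _⟩
  have hE : 0 < Real.exp (a j₀) := Real.exp_pos _
  -- (1-ε) * T ≤ S
  have hTS : (1 - ε) * T ≤ S := by
    have h := hlow j₀
    rw [hp, hq, hj₀, add_zero] at h
    rw [← mul_div_assoc, div_le_div_iff₀ hSpos hTpos] at h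
    nlinarith [h, hE]
  set R := ∑ k ∈ Finset.univ.erase j, Real.exp (a k) with hR
  set R' := ∑ k ∈ Finset.univ.erase j, Real.exp (a k + d k) with hR'
  have hRR' : R ≤ R' :=
    Finset.sum_le_sum (fun k _ => by
      have := hd0 k
      exact Real.exp_le_exp.2 (by linarith))
  have hRnonneg : 0 ≤ R :=
    Finset.sum_nonneg (fun k _ => (Real.exp_pos _).le)
  have hSsplit : S = Real.exp (a j) + R :=
    (Finset.add_sum_erase _ _ (Finset.mem_univ j)).symm
  have hTsplit : T = Real.exp (a j + d j) + R' :=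
    (Finset.add_sum_erase _ _ (Finset.mem_univ j)).symm
  have hkey : (1 - ε) * Real.exp (a j + d j) ≤ Real.exp (a j) + ε * R := by
    nlinarith [hTS, hRR']
  set Sig := ∑ k ∈ Finset.univ.erase j, Real.exp (a k - a j) with hSig
  have hSigR : Sig * Real.exp (a j) = R := by
    rw [hSig, hR, Finset.sum_mul]
    refine Finset.sum_congr rfl (fun k _ => ?_)
    rw [← Real.exp_add, sub_add_cancel]
  have hSignonneg : 0 ≤ Sig :=
    Finset.sum_nonneg (fun k _ => (Real.exp_pos _).le)
  have hXpos : 0 < (1 / (1 - ε)) * (1 + ε * Sig) := by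
    have : 0 < 1 + ε * Sig := by nlinarith
    positivity
  rw [Real.le_log_iff_exp_le hXpos]
  have hEj : 0 < Real.exp (a j) := Real.exp_pos _
  rw [← mul_le_mul_iff_left₀ hEj]
  have hexp : Real.exp (d j) * Real.exp (a j) = Real.exp (a j + d j) := by
    rw [← Real.exp_add]; ring_nf
  rw [hexp]
  have hrhs : (1 / (1 - ε)) * (1 + ε * Sig) * Real.exp (a j)
      = (Real.exp (a j) + ε * R) / (1 - ε) := by
    rw [← hSigR]
    field_simp
  rw [hrhs, le_div_iff₀ h1ε]
  nlinarith [hkey]
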